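/- Let α, ν ≥ 0 be reals and B ⊆ S with |B| ≤ νn. Suppose j ≠ i, n_{C_j} > 6(α+ν)n, and t is an integer with 6(α+ν)n < t ≤ n_{C_i} (and t ≤ n). If x is a good point of C_i and y is a good point of C_j, then |N_t(x) ∩ N_t(y)| < t − 4(α+ν)n; in particular, x and y share fewer than t − 2(α+ν)n points among their t nearest neighbors. -/

import Mathlib

set_option linter.unusedSectionVars false
set_option linter.unusedVariables false


open Finset

/-- The `t` nearest neighbors of `x` in the whole point set:
all points whose rank (w.r.t. decreasing similarity to `x`) is below `t`. -/
def nearest {V : Type*} [Fintype V] [DecidableEq V] (r : V → V → ℕ) (x : V) (t : ℕ) :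
    Finset V :=
  Finset.univ.filter fun y => r x y < t

/-- The `s` nearest neighbors of `x` within a subset `T`:
the elements `y ∈ T` such that at most `s` elements of `T` have rank at most that of `y`. -/
def nearestIn {V : Type*} [Fintype V] [DecidableEq V] (r : V → V → ℕ) (x : V)
    (T : Finset V) (s : ℕ) : Finset V :=
  T.filter fun y => (T.filter fun z => r x z ≤ r x y).card ≤ s


/-- In the weak good neighborhood setting, `x` is a good point of the cluster `Ci`
(w.r.t. the bad set `B`): `x ∈ Ci \ B` and at most `α·n` of its `|Ci \ B|` nearest
neighbors within `S \ B` lie outside `Ci \ B`. -/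
def IsGoodPoint {V : Type*} [Fintype V] [DecidableEq V] (r : V → V → ℕ)
    (α : ℝ) (B Ci : Finset V) (x : V) : Prop :=
  x ∈ Ci \ B ∧
    (((nearestIn r x (Finset.univ \ B) ((Ci \ B).card)) \ (Ci \ B)).card : ℝ)
      ≤ α * (Fintype.card V)

namespace GoodAux

variable {V : Type*} [Fintype V] [DecidableEq V] (r : V → V → ℕ) (x : V) (T : Finset V)

/-- rank-within-T count -/
def cnt (z : V) : ℕ := (T.filter fun w => r x w ≤ r x z).card

lemma mem_nearestIn {z : V} {s : ℕ} :
    z ∈ nearestIn r x T s ↔ z ∈ T ∧ cnt r x T z ≤ s := by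
  simp [nearestIn, cnt, Finset.mem_filter]

lemma cnt_lt_cnt (hinj : Function.Injective (r x)) {z w : V} (hw : w ∈ T)
    (h : r x z < r x w) : cnt r x T z < cnt r x T w := by
  apply Finset.card_lt_card
  constructor
  · intro u hu
    simp only [Finset.mem_filter] at hu ⊢
    exact ⟨hu.1, hu.2.trans h.le⟩
  · intro hsub
    have hwmem : w ∈ T.filter fun u => r x u ≤ r x w := by
      simp [hw]
    have := hsub hwmem
    simp only [Finset.mem_filter] at this
    omega

lemma cnt_injOn (hinj : Function.Injective (r x)) {z w : V} (hz : z ∈ T) (hw : w ∈ T)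
    (h : cnt r x T z = cnt r x T w) : z = w := by
  by_contra hne
  have hr : r x z ≠ r x w := fun hrr => hne (hinj hrr)
  rcases lt_or_gt_of_ne hr with hlt | hlt
  · exact absurd h (Nat.ne_of_lt (cnt_lt_cnt r x T hinj hw hlt))
  · exact absurd h.symm (Nat.ne_of_lt (cnt_lt_cnt r x T hinj hz hlt))

lemma one_le_cnt {z : V} (hz : z ∈ T) : 1 ≤ cnt r x T z := by
  have : z ∈ T.filter fun w => r x w ≤ r x z := by simp [hz]
  exact Finset.card_pos.mpr ⟨z, this⟩

lemma cnt_le_card {z : V} : cnt r x T z ≤ T.card :=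
  Finset.card_le_card (Finset.filter_subset _ _)

lemma nearestIn_mono {s s' : ℕ} (h : s ≤ s') :
    nearestIn r x T s ⊆ nearestIn r x T s' := by
  intro z hz
  rw [mem_nearestIn] at hz ⊢
  exact ⟨hz.1, hz.2.trans h⟩

lemma card_nearestIn_ge (hinj : Function.Injective (r x)) {q : ℕ} (hq : q ≤ T.card) :
    q ≤ (nearestIn r x T q).card := by
  have hsurj := Finset.surj_on_of_inj_on_of_card_le
    (s := T) (t := Finset.Icc 1 T.card) (fun a _ => cnt r x T a)
    (fun a ha => by
      simp only [Finset.mem_Icc]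
      exact ⟨one_le_cnt r x T ha, cnt_le_card r x T⟩)
    (fun a b ha hb h => cnt_injOn r x T hinj ha hb h)
    (by simp [Nat.card_Icc])
  have key : (Finset.Icc 1 q).card ≤ (nearestIn r x T q).card := by
    apply Finset.card_le_card_of_surjOn (cnt r x T)
    intro v hv
    simp only [Finset.coe_Icc, Set.mem_Icc] at hv
    obtain ⟨a, ha, hav⟩ := hsurj v (by simp only [Finset.mem_Icc]; exact ⟨hv.1, hv.2.trans hq⟩)
    refine ⟨a, ?_, hav.symm⟩
    simp only [Finset.mem_coe]
    exact (mem_nearestIn r x T).mpr ⟨ha, by omega⟩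
  simpa [Nat.card_Icc] using key

lemma cnt_le_of_mem_prefix {t : ℕ} {z : V} (hz : z ∈ nearest r x t ∩ T) :
    cnt r x T z ≤ (nearest r x t ∩ T).card := by
  apply Finset.card_le_card
  intro w hw
  simp only [Finset.mem_filter] at hw
  simp only [Finset.mem_inter, nearest, Finset.mem_filter, Finset.mem_univ, true_and] at hz ⊢
  exact ⟨lt_of_le_of_lt hw.2 hz.1, hw.1⟩

lemma nearestIn_subset_nearest {t : ℕ} :
    nearestIn r x T ((nearest r x t ∩ T).card) ⊆ nearest r x t := by
  intro z hz
  rw [mem_nearestIn] at hz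
  by_contra hzt
  simp only [nearest, Finset.mem_filter, Finset.mem_univ, true_and, not_lt] at hzt
  have hss : nearest r x t ∩ T ⊂ T.filter fun w => r x w ≤ r x z := by
    constructor
    · intro w hw
      simp only [Finset.mem_inter, nearest, Finset.mem_filter, Finset.mem_univ, true_and] at hw ⊢
      exact ⟨hw.2, le_of_lt (lt_of_lt_of_le hw.1 hzt)⟩
    · intro hsub
      have : z ∈ nearest r x t ∩ T := hsub (by simp [hz.1])
      simp only [Finset.mem_inter, nearest, Finset.mem_filter, Finset.mem_univ, true_and] at this
      omega
  have := Finset.card_lt_card hss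
  have h2 := hz.2
  unfold cnt at h2
  omega

lemma card_prefix_sdiff_nearestIn_le (hinj : Function.Injective (r x)) {t s : ℕ} :
    ((nearest r x t ∩ T) \ nearestIn r x T s).card ≤ (nearest r x t ∩ T).card - s := by
  have : ((nearest r x t ∩ T) \ nearestIn r x T s).card ≤ (Finset.Icc (s + 1) (nearest r x t ∩ T).card).card := by
    apply Finset.card_le_card_of_injOn (cnt r x T)
    · intro z hz
      simp only [Finset.mem_coe, Finset.mem_sdiff] at hz
      have hzT : z ∈ T := (Finset.mem_inter.mp hz.1).2
      have h1 : ¬ cnt r x T z ≤ s := fun h => hz.2 ((mem_nearestIn r x T).mpr ⟨hzT, h⟩)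
      have h2 := cnt_le_of_mem_prefix r x T hz.1
      simp only [Finset.mem_coe, Finset.mem_Icc]
      omega
    · intro a ha b hb h
      simp only [Finset.mem_coe, Finset.mem_sdiff, Finset.mem_inter] at ha hb
      exact cnt_injOn r x T hinj ha.1.2 hb.1.2 h
  simpa [Nat.card_Icc] using this

lemma card_nearest (hinj : Function.Injective (r x))
    (hlt : ∀ y, r x y < Fintype.card V) {t : ℕ} (ht : t ≤ Fintype.card V) :
    (nearest r x t).card = t := by
  have himg : Finset.image (r x) Finset.univ = Finset.range (Fintype.card V) := by
    apply Finset.eq_of_subset_of_card_le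
    · intro v hv
      simp only [Finset.mem_image] at hv
      obtain ⟨w, _, hw⟩ := hv
      simp [← hw, hlt w]
    · rw [Finset.card_range, Finset.card_image_of_injective _ hinj]
      simp
  have : (nearest r x t).image (r x) = Finset.range t := by
    have := (Finset.filter_image (f := r x) (s := (Finset.univ : Finset V)) (p := fun v => v < t)).symm
    rw [nearest, this, himg]
    ext v
    simp only [Finset.mem_filter, Finset.mem_range]
    omega
  have hcard := congrArg Finset.card this
  rwa [Finset.card_image_of_injective _ hinj, Finset.card_range] at hcard

end GoodAux

set_option maxHeartbeats 1000000

theorem weak_good_points_different_clusters_few_common_neighbors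
    {V : Type*} [Fintype V] [DecidableEq V] {k : ℕ}
    (r : V → V → ℕ) (C : Fin k → Finset V) (α ν : ℝ) (B : Finset V)
    (hn : 0 < Fintype.card V)
    (hα : 0 ≤ α) (hν : 0 ≤ ν)
    (hrinj : ∀ x : V, Function.Injective (r x))
    (hrlt : ∀ x y : V, r x y < Fintype.card V)
    (hdis : ∀ i j : Fin k, i ≠ j → Disjoint (C i) (C j))
    (hcov : ∀ x : V, ∃ i : Fin k, x ∈ C i)
    (hB : (B.card : ℝ) ≤ ν * (Fintype.card V))
    (i j : Fin k) (hij : j ≠ i)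
    (hCj : 6 * (α + ν) * (Fintype.card V) < ((C j).card : ℝ))
    (t : ℕ) (htlo : 6 * (α + ν) * (Fintype.card V) < (t : ℝ))
    (hthi : t ≤ (C i).card) (htn : t ≤ Fintype.card V)
    (x : V) (hx : IsGoodPoint r α B (C i) x)
    (y : V) (hy : IsGoodPoint r α B (C j) y) :
    (((nearest r x t) ∩ (nearest r y t)).card : ℝ)
        < (t : ℝ) - 4 * (α + ν) * (Fintype.card V) ∧
    (((nearest r x t) ∩ (nearest r y t)).card : ℝ)
        < (t : ℝ) - 2 * (α + ν) * (Fintype.card V) := by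
  set T : Finset V := Finset.univ \ B with hT
  obtain ⟨hxmem, hxgood⟩ := hx
  obtain ⟨hymem, hygood⟩ := hy
  set Ax : Finset V := nearestIn r x T ((C i \ B).card) with hAx
  set Ay : Finset V := nearestIn r y T ((C j \ B).card) with hAy
  have hcx : (nearest r x t).card = t := GoodAux.card_nearest r x (hrinj x) (hrlt x) htn
  have hcy : (nearest r y t).card = t := GoodAux.card_nearest r y (hrinj y) (hrlt y) htn
  have hinterT : ∀ s : Finset V, s ∩ T = s \ B := by
    intro s; ext z
    simp [hT, Finset.mem_inter, Finset.mem_sdiff, and_comm]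
  -- x side
  have hpx : (nearest r x t ∩ T).card + (nearest r x t ∩ B).card = t := by
    rw [hinterT, Finset.card_sdiff_add_card_inter, hcx]
  have hbx : (nearest r x t ∩ B).card ≤ B.card :=
    Finset.card_le_card Finset.inter_subset_right
  have hCisplit : (C i \ B).card + (C i ∩ B).card = (C i).card :=
    Finset.card_sdiff_add_card_inter _ _
  have hCiB : (C i ∩ B).card ≤ B.card := Finset.card_le_card Finset.inter_subset_right
  have hsubx : nearest r x t \ C i ⊆
      (nearest r x t ∩ B) ∪ (((nearest r x t ∩ T) \ Ax) ∪ (Ax \ (C i \ B))) := by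
    intro z hz
    rw [Finset.mem_sdiff] at hz
    rw [Finset.mem_union, Finset.mem_union]
    by_cases hzB : z ∈ B
    · exact Or.inl (Finset.mem_inter.mpr ⟨hz.1, hzB⟩)
    · have hzT : z ∈ T := by simp [hT, hzB]
      by_cases hzA : z ∈ Ax
      · refine Or.inr (Or.inr (Finset.mem_sdiff.mpr ⟨hzA, fun hc => ?_⟩))
        exact hz.2 (Finset.mem_sdiff.mp hc).1
      · exact Or.inr (Or.inl (Finset.mem_sdiff.mpr ⟨Finset.mem_inter.mpr ⟨hz.1, hzT⟩, hzA⟩))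
  have hdx : ((nearest r x t ∩ T) \ Ax).card ≤ (nearest r x t ∩ T).card - (C i \ B).card :=
    GoodAux.card_prefix_sdiff_nearestIn_le r x T (hrinj x)
  have hx_card : (nearest r x t \ C i).card ≤ B.card + (Ax \ (C i \ B)).card := by
    have h1 := Finset.card_le_card hsubx
    have h2 := Finset.card_union_le (nearest r x t ∩ B)
      (((nearest r x t ∩ T) \ Ax) ∪ (Ax \ (C i \ B)))
    have h3 := Finset.card_union_le ((nearest r x t ∩ T) \ Ax) (Ax \ (C i \ B))
    omega
  -- y side
  have hpy : (nearest r y t ∩ T).card + (nearest r y t ∩ B).card = t := by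
    rw [hinterT, Finset.card_sdiff_add_card_inter, hcy]
  have hby : (nearest r y t ∩ B).card ≤ B.card :=
    Finset.card_le_card Finset.inter_subset_right
  have hCjsplit : (C j \ B).card + (C j ∩ B).card = (C j).card :=
    Finset.card_sdiff_add_card_inter _ _
  have hCjB : (C j ∩ B).card ≤ B.card := Finset.card_le_card Finset.inter_subset_right
  set q : ℕ := min ((nearest r y t ∩ T).card) ((C j \ B).card) with hq
  have hqT : q ≤ T.card :=
    le_trans (min_le_left _ _) (Finset.card_le_card Finset.inter_subset_right)
  set Q : Finset V := nearestIn r y T q with hQ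
  have hQcard : q ≤ Q.card := GoodAux.card_nearestIn_ge r y T (hrinj y) hqT
  have hQsub1 : Q ⊆ nearest r y t :=
    (GoodAux.nearestIn_mono r y T (min_le_left _ _)).trans
      (GoodAux.nearestIn_subset_nearest r y T)
  have hQsub2 : Q \ (C j \ B) ⊆ Ay \ (C j \ B) :=
    Finset.sdiff_subset_sdiff (GoodAux.nearestIn_mono r y T (min_le_right _ _))
      Finset.Subset.rfl
  have hQin : Q ∩ (C j \ B) ⊆ nearest r y t ∩ C j :=
    Finset.inter_subset_inter hQsub1 Finset.sdiff_subset
  have hQsplit : (Q ∩ (C j \ B)).card + (Q \ (C j \ B)).card = Q.card :=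
    Finset.card_inter_add_card_sdiff _ _
  have hyq : q ≤ (nearest r y t ∩ C j).card + (Ay \ (C j \ B)).card := by
    have h1 := Finset.card_le_card hQin
    have h2 := Finset.card_le_card hQsub2
    omega
  have hdisj : (nearest r y t ∩ C i).card + (nearest r y t ∩ C j).card ≤ t := by
    have hd : Disjoint (nearest r y t ∩ C i) (nearest r y t ∩ C j) :=
      Disjoint.mono Finset.inter_subset_right Finset.inter_subset_right
        (hdis i j (Ne.symm hij))
    have hsub : (nearest r y t ∩ C i) ∪ (nearest r y t ∩ C j) ⊆ nearest r y t := by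
      intro z hz
      rcases Finset.mem_union.mp hz with h | h
      · exact (Finset.mem_inter.mp h).1
      · exact (Finset.mem_inter.mp h).1
    have := Finset.card_le_card hsub
    rw [Finset.card_union_of_disjoint hd, hcy] at this
    exact this
  -- combine
  have hsplit2 : (nearest r x t ∩ nearest r y t).card ≤
      (nearest r x t \ C i).card + (nearest r y t ∩ C i).card := by
    have hsub : nearest r x t ∩ nearest r y t ⊆
        (nearest r x t \ C i) ∪ (nearest r y t ∩ C i) := by
      intro z hz
      rw [Finset.mem_inter] at hz
      rw [Finset.mem_union]
      by_cases hzC : z ∈ C i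
      · exact Or.inr (Finset.mem_inter.mpr ⟨hz.2, hzC⟩)
      · exact Or.inl (Finset.mem_sdiff.mpr ⟨hz.1, hzC⟩)
    exact le_trans (Finset.card_le_card hsub) (Finset.card_union_le _ _)
  have main : (nearest r x t ∩ nearest r y t).card + min t (C j).card ≤
      2 * B.card + (Ax \ (C i \ B)).card + (Ay \ (C j \ B)).card + t := by
    omega
  have hmin : 6 * (α + ν) * (Fintype.card V) < ((min t (C j).card : ℕ) : ℝ) := by
    rcases le_total t (C j).card with h | h
    · rw [min_eq_left h]; exact htlo
    · rw [min_eq_right h]; exact hCj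
  have mainR : ((nearest r x t ∩ nearest r y t).card : ℝ) + ((min t (C j).card : ℕ) : ℝ) ≤
      2 * (B.card : ℝ) + ((Ax \ (C i \ B)).card : ℝ) + ((Ay \ (C j \ B)).card : ℝ) + t := by
    exact_mod_cast main
  have h1 : ((nearest r x t ∩ nearest r y t).card : ℝ) <
      (t : ℝ) - 4 * (α + ν) * (Fintype.card V) := by
    nlinarith [hxgood, hygood, hB, hmin, mainR]
  refine ⟨h1, ?_⟩
  have hnn : 0 ≤ (α + ν) * (Fintype.card V) := by positivity
  nlinarith [h1, hnn]
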